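/- arXiv:2010.04610 — 2 statements merged into one kernel-verified Lean document; each statement's English description precedes it below -/
import Mathlib

section
/- Suppose X ~ N(μ, λ²) for some μ ∈ ℝ and λ > 0. Then E[(e^X − 1)²] ≤ (e^{μ+λ²} + 1)² (8|μ| + 6λ²). -/
open MeasureTheory ProbabilityTheory Real
open scoped NNReal ENNReal

lemma aux_pdf_mul (m : ℝ) (v : ℝ≥0) (hv : v ≠ 0) (t x : ℝ) :
    Real.exp (t * x) * gaussianPDFReal m v x
      = Real.exp (t * m + v * t ^ 2 / 2) * gaussianPDFReal (m + v * t) v x := by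
  have hv' : (v : ℝ) ≠ 0 := by exact_mod_cast hv
  have h : Real.exp (t * x) * Real.exp (-(x - m) ^ 2 / (2 * (v : ℝ)))
      = Real.exp (t * m + v * t ^ 2 / 2)
        * Real.exp (-(x - (m + v * t)) ^ 2 / (2 * (v : ℝ))) := by
    rw [← Real.exp_add, ← Real.exp_add]
    congr 1
    field_simp
    ring
  simp only [gaussianPDFReal]
  linear_combination ((Real.sqrt (2 * Real.pi * v))⁻¹) * h

lemma aux_smul_eq (m : ℝ) (v : ℝ≥0) (t x : ℝ) :
    (Real.toNNReal (gaussianPDFReal m v x) : ℝ≥0) • Real.exp (t * x)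
      = Real.exp (t * x) * gaussianPDFReal m v x := by
  rw [NNReal.smul_def, smul_eq_mul, Real.coe_toNNReal _ (gaussianPDFReal_nonneg m v x), mul_comm]

lemma integrable_exp_gaussianReal (m : ℝ) (v : ℝ≥0) (hv : v ≠ 0) (t : ℝ) :
    Integrable (fun x => Real.exp (t * x)) (gaussianReal m v) := by
  rw [gaussianReal_of_var_ne_zero _ hv, gaussianPDF_def]
  rw [show (fun x => ENNReal.ofReal (gaussianPDFReal m v x))
      = fun x => ((Real.toNNReal (gaussianPDFReal m v x) : ℝ≥0) : ℝ≥0∞) from rfl]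
  rw [integrable_withDensity_iff_integrable_smul
    ((measurable_gaussianPDFReal m v).real_toNNReal)]
  refine ((integrable_gaussianPDFReal (m + v * t) v).const_mul
    (Real.exp (t * m + v * t ^ 2 / 2))).congr (ae_of_all _ fun x => ?_)
  dsimp only
  rw [aux_smul_eq, aux_pdf_mul m v hv t x]

lemma integral_exp_gaussianReal (m : ℝ) (v : ℝ≥0) (hv : v ≠ 0) (t : ℝ) :
    ∫ x, Real.exp (t * x) ∂(gaussianReal m v) = Real.exp (t * m + v * t ^ 2 / 2) := by
  rw [gaussianReal_of_var_ne_zero _ hv, gaussianPDF_def]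
  rw [show (fun x => ENNReal.ofReal (gaussianPDFReal m v x))
      = fun x => ((Real.toNNReal (gaussianPDFReal m v x) : ℝ≥0) : ℝ≥0∞) from rfl]
  rw [integral_withDensity_eq_integral_smul
    ((measurable_gaussianPDFReal m v).real_toNNReal)]
  have : ∀ x, (Real.toNNReal (gaussianPDFReal m v x) : ℝ≥0) • Real.exp (t * x)
      = Real.exp (t * m + v * t ^ 2 / 2) * gaussianPDFReal (m + v * t) v x := fun x => by
    rw [aux_smul_eq, aux_pdf_mul m v hv t x]
  simp_rw [this]
  rw [integral_const_mul, integral_gaussianPDFReal_eq_one _ hv, mul_one]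

lemma scalar_ineq (m s : ℝ) (hs : 0 < s) :
    Real.exp (2 * m + s * 2 ^ 2 / 2) - 2 * Real.exp (1 * m + s * 1 ^ 2 / 2) + 1
      ≤ (Real.exp (m + s) + 1) ^ 2 * (8 * |m| + 6 * s) := by
  rw [show 2 * m + s * 2 ^ 2 / 2 = 2 * m + 2 * s by ring,
      show 1 * m + s * 1 ^ 2 / 2 = m + s / 2 by ring]
  set A := Real.exp (m + s) with hA_def
  have hA : 0 < A := Real.exp_pos _
  have hA2 : Real.exp (2 * m + 2 * s) = A ^ 2 := by
    rw [sq, ← Real.exp_add]; ring_nf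
  have hsplit : A = Real.exp (m + s / 2) * Real.exp (s / 2) := by
    rw [hA_def, ← Real.exp_add]; ring_nf
  have hE : Real.exp (s / 2) - 1 ≤ s / 2 * Real.exp (s / 2) := by
    have h1 := Real.add_one_le_exp (-(s / 2))
    have h2 : Real.exp (-(s / 2)) * Real.exp (s / 2) = 1 := by
      rw [← Real.exp_add]; simp
    nlinarith [Real.exp_pos (s / 2)]
  have habs : |m + s| ≤ |m| + s := (abs_add_le m s).trans (by rw [abs_of_pos hs])
  have h1 : (A - 1) ^ 2 ≤ (A + 1) ^ 2 * (8 * |m| + 5 * s) := by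
    rcases le_or_gt (|m + s|) 1 with h | h
    · have hb := Real.abs_exp_sub_one_le h
      have hb2 : (A - 1) ^ 2 ≤ (2 * |m + s|) ^ 2 := by
        rw [← sq_abs (A - 1)]
        exact pow_le_pow_left₀ (abs_nonneg _) hb 2
      have hb3 : (2 * |m + s|) ^ 2 ≤ 4 * |m + s| := by
        nlinarith [abs_nonneg (m + s)]
      have hb4 : (A - 1) ^ 2 ≤ 4 * |m| + 4 * s := by nlinarith
      have hone : (1 : ℝ) ≤ (A + 1) ^ 2 := by nlinarith
      nlinarith [abs_nonneg m, mul_nonneg (abs_nonneg m) (sub_nonneg.2 hone)]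
    · have h5 : (1 : ℝ) ≤ 8 * |m| + 5 * s := by nlinarith [abs_nonneg m]
      have hb : (A - 1) ^ 2 ≤ (A + 1) ^ 2 := by nlinarith
      nlinarith [sq_nonneg (A + 1)]
  have hterm2 : Real.exp (m + s / 2) * (Real.exp (s / 2) - 1) ≤ s / 2 * A := by
    calc Real.exp (m + s / 2) * (Real.exp (s / 2) - 1)
        ≤ Real.exp (m + s / 2) * (s / 2 * Real.exp (s / 2)) :=
          mul_le_mul_of_nonneg_left hE (Real.exp_pos _).le
      _ = s / 2 * A := by rw [hsplit]; ring
  have hAle : A ≤ (A + 1) ^ 2 := by nlinarith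
  have hkey : Real.exp (2 * m + 2 * s) - 2 * Real.exp (m + s / 2) + 1
      = (A - 1) ^ 2 + 2 * (Real.exp (m + s / 2) * (Real.exp (s / 2) - 1)) := by
    rw [hA2]
    nlinarith [hsplit]
  rw [hkey]
  have h2 : 2 * (Real.exp (m + s / 2) * (Real.exp (s / 2) - 1)) ≤ s * A := by linarith
  have h3 : s * A ≤ s * (A + 1) ^ 2 := mul_le_mul_of_nonneg_left hAle hs.le
  nlinarith

/-- If `X ~ N(μ, λ²)` then `E[(e^X - 1)²] ≤ (e^{μ+λ²} + 1)² (8|μ| + 6λ²)`. -/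
theorem stmt_2 {Ω : Type*} [MeasurableSpace Ω] (P : Measure Ω) [IsProbabilityMeasure P]
    (X : Ω → ℝ) (μ lam : ℝ) (hlam : 0 < lam)
    (hX : Measure.map X P = gaussianReal μ (Real.toNNReal (lam ^ 2))) :
    ∫ ω, (Real.exp (X ω) - 1) ^ 2 ∂P ≤
      (Real.exp (μ + lam ^ 2) + 1) ^ 2 * (8 * |μ| + 6 * lam ^ 2) := by
  set v : ℝ≥0 := Real.toNNReal (lam ^ 2) with hv_def
  have hv : v ≠ 0 := by
    simp only [hv_def, ne_eq, Real.toNNReal_eq_zero, not_le]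
    positivity
  have hvc : (v : ℝ) = lam ^ 2 := Real.coe_toNNReal _ (sq_nonneg lam)
  have hae : AEMeasurable X P := by
    by_contra h
    rw [Measure.map_of_not_aemeasurable h] at hX
    exact IsProbabilityMeasure.ne_zero (gaussianReal μ v) hX.symm
  have hsm : AEStronglyMeasurable (fun x : ℝ => (Real.exp x - 1) ^ 2)
      (Measure.map X P) :=
    (((Real.continuous_exp.sub continuous_const).pow 2)).measurable.aestronglyMeasurable
  have hmap : ∫ ω, (Real.exp (X ω) - 1) ^ 2 ∂P
      = ∫ x, (Real.exp x - 1) ^ 2 ∂(gaussianReal μ v) := by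
    rw [← hX, integral_map hae hsm]
  rw [hmap]
  have hint2 := integrable_exp_gaussianReal μ v hv 2
  have hint1 := integrable_exp_gaussianReal μ v hv 1
  have hexpand : ∀ x : ℝ, (Real.exp x - 1) ^ 2
      = Real.exp (2 * x) - 2 * Real.exp (1 * x) + 1 := fun x => by
    rw [two_mul, Real.exp_add, one_mul]; ring
  simp_rw [hexpand]
  have hsub : Integrable (fun x => Real.exp (2 * x) - 2 * Real.exp (1 * x))
      (gaussianReal μ v) := hint2.sub (hint1.const_mul 2)
  rw [integral_add hsub (integrable_const 1),
      integral_sub hint2 (hint1.const_mul 2), integral_const_mul,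
      integral_exp_gaussianReal μ v hv 2, integral_exp_gaussianReal μ v hv 1,
      integral_const]
  simp only [measure_univ, probReal_univ, ENNReal.toReal_one, smul_eq_mul, one_mul, mul_one]
  rw [hvc]
  have := scalar_ineq μ (lam ^ 2) (by positivity)
  rw [one_mul] at this
  linarith
end

section
/- Let κ : [0,∞) → ℝ satisfy: (a) κ(ℓ) → 0 as ℓ → ∞; (b) there is an integrable φ : [−1,1] → ℝ with κ(ℓ+y)/κ(ℓ) → φ(y) as ℓ → ∞ for each y ∈ [−1,1]; and (c) limsup_{ℓ→∞} sup_{y∈[−1,1]} |κ(ℓ+y)/κ(ℓ)| < ∞, with κ(ℓ) > 0 for all large ℓ. Define γ(ℓ) = ξ² ∫_0^1 (1−y)[ exp(κ(|ℓ−y|)) − 1 + exp(κ(ℓ+y)) − 1 ] dy for ξ > 0. Then γ(ℓ) / (ξ² κ(ℓ)) → ∫_{−1}^1 (1−|y|) φ(y) dy as ℓ → ∞. -/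
open MeasureTheory Filter

lemma exp_slope_tendsto :
    Tendsto (fun x : ℝ => (Real.exp x - 1) / x) (nhdsWithin 0 {0}ᶜ) (nhds 1) := by
  have h := hasDerivAt_iff_tendsto_slope.mp (Real.hasDerivAt_exp 0)
  simp only [Real.exp_zero] at h
  refine h.congr fun x => ?_
  simp [slope_def_field]

/-- Asymptotic equivalence of the autocovariance of integrated variance:
under (a) `κ(ℓ) → 0`, (b) pointwise convergence `κ(ℓ+y)/κ(ℓ) → φ(y)` with `φ`
integrable, and (c) a uniform bound on the ratios (with `κ(ℓ) > 0` eventually),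
the quantity `γ(ℓ) = ξ² ∫_0^1 (1-y)[e^{κ|ℓ-y|} - 1 + e^{κ(ℓ+y)} - 1] dy`
satisfies `γ(ℓ)/(ξ² κ(ℓ)) → ∫_{-1}^1 (1-|y|) φ(y) dy`. -/
theorem stmt_10 (κ : ℝ → ℝ) (φ : ℝ → ℝ) (ξ : ℝ) (hξ : 0 < ξ)
    (hκcont : Continuous κ)
    (ha : Tendsto κ atTop (nhds 0))
    (hφint : IntegrableOn φ (Set.Icc (-1 : ℝ) 1))
    (hb : ∀ y ∈ Set.Icc (-1 : ℝ) 1,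
      Tendsto (fun ℓ : ℝ => κ (ℓ + y) / κ ℓ) atTop (nhds (φ y)))
    (hc : ∃ C : ℝ, ∀ᶠ ℓ : ℝ in atTop, ∀ y ∈ Set.Icc (-1 : ℝ) 1, |κ (ℓ + y) / κ ℓ| ≤ C)
    (hpos : ∀ᶠ ℓ : ℝ in atTop, 0 < κ ℓ) :
    Tendsto
      (fun ℓ : ℝ =>
        (ξ ^ 2 * ∫ y in (0:ℝ)..1,
            (1 - y) * ((Real.exp (κ |ℓ - y|) - 1) + (Real.exp (κ (ℓ + y)) - 1))) /
          (ξ ^ 2 * κ ℓ))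
      atTop (nhds (∫ y in (-1 : ℝ)..1, (1 - |y|) * φ y)) := by
  obtain ⟨C, hC⟩ := hc
  set C₀ : ℝ := max C 0 with hC₀def
  have hC₀ : 0 ≤ C₀ := le_max_right _ _
  -- key ratio limit
  have key : ∀ z ∈ Set.Icc (-1:ℝ) 1,
      Tendsto (fun ℓ => (Real.exp (κ (ℓ + z)) - 1) / κ ℓ) atTop (nhds (φ z)) := by
    intro z hz
    have hshift : Tendsto (fun ℓ : ℝ => ℓ + z) atTop atTop :=
      tendsto_atTop_add_const_right _ z tendsto_id
    have h1 : Tendsto (fun ℓ : ℝ => κ (ℓ + z)) atTop (nhds 0) := ha.comp hshift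
    have hp2 : ∀ᶠ ℓ : ℝ in atTop, 0 < κ (ℓ + z) := hshift.eventually hpos
    have hE : Tendsto (fun ℓ : ℝ => (Real.exp (κ (ℓ + z)) - 1) / κ (ℓ + z)) atTop (nhds 1) := by
      apply exp_slope_tendsto.comp
      rw [tendsto_nhdsWithin_iff]
      exact ⟨h1, hp2.mono fun ℓ h => by simpa using ne_of_gt h⟩
    have h2 := hE.mul (hb z hz)
    rw [one_mul] at h2
    refine h2.congr' ?_
    filter_upwards [hp2, hpos] with ℓ hpz hp0
    field_simp
  -- rewrite the function
  have hfun : (fun ℓ : ℝ =>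
        (ξ ^ 2 * ∫ y in (0:ℝ)..1,
            (1 - y) * ((Real.exp (κ |ℓ - y|) - 1) + (Real.exp (κ (ℓ + y)) - 1))) /
          (ξ ^ 2 * κ ℓ)) =
      fun ℓ : ℝ => ∫ y in (0:ℝ)..1,
          ((1 - y) * ((Real.exp (κ |ℓ - y|) - 1) + (Real.exp (κ (ℓ + y)) - 1))) / κ ℓ := by
    funext ℓ
    rw [mul_div_mul_left _ _ (by positivity : (ξ:ℝ) ^ 2 ≠ 0), ← intervalIntegral.integral_div]
  rw [hfun]
  -- target integral equality
  have hbd : ∀ᵐ x ∂(volume.restrict (Set.Icc (-1:ℝ) 1)), ‖(1 : ℝ) - |x|‖ ≤ 1 := by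
    rw [ae_restrict_iff' measurableSet_Icc]
    refine Eventually.of_forall fun x hx => ?_
    have h1 : |x| ≤ 1 := abs_le.mpr ⟨hx.1, hx.2⟩
    rw [Real.norm_eq_abs, abs_of_nonneg (by linarith)]
    linarith [abs_nonneg x]
  have hIcc : IntegrableOn (fun y : ℝ => (1 - |y|) * φ y) (Set.Icc (-1:ℝ) 1) :=
    hφint.bdd_mul ((continuous_const.sub continuous_abs).aestronglyMeasurable) hbd
  have hR : IntervalIntegrable (fun y : ℝ => (1 - |y|) * φ y) volume 0 1 := by
    rw [intervalIntegrable_iff_integrableOn_Ioc_of_le zero_le_one]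
    exact hIcc.mono_set ((Set.Ioc_subset_Icc_self).trans (Set.Icc_subset_Icc (by norm_num) le_rfl))
  have hL : IntervalIntegrable (fun y : ℝ => (1 - |y|) * φ y) volume (-1) 0 := by
    rw [intervalIntegrable_iff_integrableOn_Ioc_of_le (by norm_num)]
    exact hIcc.mono_set ((Set.Ioc_subset_Icc_self).trans (Set.Icc_subset_Icc le_rfl (by norm_num)))
  have hLneg : IntervalIntegrable (fun y : ℝ => (1 - |(-y)|) * φ (-y)) volume 0 1 := by
    have := (IntervalIntegrable.iff_comp_neg (by simp)).mp hL
    simpa using this.symm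
  have heq : (∫ y in (-1:ℝ)..1, (1 - |y|) * φ y) =
      ∫ y in (0:ℝ)..1, (1 - y) * (φ (-y) + φ y) := by
    rw [← intervalIntegral.integral_add_adjacent_intervals hL hR]
    have hcn : (∫ y in (0:ℝ)..1, (1 - |(-y)|) * φ (-y)) = ∫ y in (-1:ℝ)..0, (1 - |y|) * φ y := by
      have := intervalIntegral.integral_comp_neg (a := (0:ℝ)) (b := 1)
        (fun y : ℝ => (1 - |y|) * φ y)
      simpa using this
    rw [← hcn, ← intervalIntegral.integral_add hLneg hR]
    refine intervalIntegral.integral_congr fun x hx => ?_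
    rw [Set.uIcc_of_le zero_le_one] at hx
    have : |x| = x := abs_of_nonneg hx.1
    simp only [abs_neg, this]
    ring
  rw [heq]
  -- dominated convergence
  apply intervalIntegral.tendsto_integral_filter_of_dominated_convergence
    (bound := fun _ => 4 * C₀)
  · refine Eventually.of_forall fun ℓ => ?_
    have : Continuous (fun y : ℝ =>
        ((1 - y) * ((Real.exp (κ |ℓ - y|) - 1) + (Real.exp (κ (ℓ + y)) - 1))) / κ ℓ) := by
      fun_prop
    exact this.aestronglyMeasurable
  · -- bound
    have hsmall : ∀ᶠ ℓ : ℝ in atTop, |κ ℓ| < 1 / (C₀ + 1) := by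
      have := Metric.tendsto_nhds.mp ha (1 / (C₀ + 1)) (by positivity)
      simpa [Real.dist_eq] using this
    filter_upwards [hC, hpos, hsmall, eventually_ge_atTop (1:ℝ)] with ℓ hCℓ hpℓ hsℓ hℓ1
    refine Eventually.of_forall fun x hx => ?_
    rw [Set.uIoc_of_le zero_le_one] at hx
    obtain ⟨hx0, hx1⟩ := hx
    have habs : |ℓ - x| = ℓ + (-x) := by
      rw [abs_of_nonneg (by linarith)]; ring
    have hrat1 := hCℓ (-x) ⟨by linarith, by linarith⟩
    have hrat2 := hCℓ x ⟨by linarith, by linarith⟩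
    have hκℓ : |κ ℓ| = κ ℓ := abs_of_pos hpℓ
    have hb1 : |κ (ℓ + -x)| ≤ C₀ * κ ℓ := by
      rw [abs_div, hκℓ, div_le_iff₀ hpℓ] at hrat1
      calc |κ (ℓ + -x)| ≤ C * κ ℓ := hrat1
        _ ≤ C₀ * κ ℓ := by
            have := le_max_left C 0
            nlinarith
    have hb2 : |κ (ℓ + x)| ≤ C₀ * κ ℓ := by
      rw [abs_div, hκℓ, div_le_iff₀ hpℓ] at hrat2
      calc |κ (ℓ + x)| ≤ C * κ ℓ := hrat2
        _ ≤ C₀ * κ ℓ := by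
            have := le_max_left C 0
            nlinarith
    have hCκ : C₀ * κ ℓ ≤ 1 := by
      rw [hκℓ] at hsℓ
      have h1 : κ ℓ ≤ 1 / (C₀ + 1) := le_of_lt hsℓ
      have h2 : C₀ * κ ℓ ≤ C₀ * (1 / (C₀ + 1)) := by nlinarith
      have h3 : C₀ * (1 / (C₀ + 1)) ≤ 1 := by
        rw [mul_one_div, div_le_one (by positivity)]; linarith
      linarith
    have he1 : |Real.exp (κ (ℓ + -x)) - 1| ≤ 2 * (C₀ * κ ℓ) := by
      have := Real.abs_exp_sub_one_le (hb1.trans hCκ)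
      linarith
    have he2 : |Real.exp (κ (ℓ + x)) - 1| ≤ 2 * (C₀ * κ ℓ) := by
      have := Real.abs_exp_sub_one_le (hb2.trans hCκ)
      linarith
    have hS : |(Real.exp (κ |ℓ - x|) - 1) + (Real.exp (κ (ℓ + x)) - 1)| ≤ 4 * C₀ * κ ℓ := by
      rw [habs]
      calc _ ≤ |Real.exp (κ (ℓ + -x)) - 1| + |Real.exp (κ (ℓ + x)) - 1| := abs_add_le _ _
        _ ≤ 4 * C₀ * κ ℓ := by linarith
    have h1x : |1 - x| ≤ 1 := by
      rw [abs_of_nonneg (by linarith)]; linarith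
    rw [Real.norm_eq_abs, abs_div, abs_mul, hκℓ, div_le_iff₀ hpℓ]
    have hmul : |1 - x| * |(Real.exp (κ |ℓ - x|) - 1) + (Real.exp (κ (ℓ + x)) - 1)| ≤
        |(Real.exp (κ |ℓ - x|) - 1) + (Real.exp (κ (ℓ + x)) - 1)| :=
      mul_le_of_le_one_left (abs_nonneg _) h1x
    calc |1 - x| * |(Real.exp (κ |ℓ - x|) - 1) + (Real.exp (κ (ℓ + x)) - 1)|
        ≤ 4 * C₀ * κ ℓ := hmul.trans hS
      _ = 4 * C₀ * κ ℓ := rfl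
  · exact intervalIntegrable_const
  · -- pointwise limit
    refine Eventually.of_forall fun x hx => ?_
    rw [Set.uIoc_of_le zero_le_one] at hx
    obtain ⟨hx0, hx1⟩ := hx
    have h1 := key (-x) ⟨by linarith, by linarith⟩
    have h2 := key x ⟨by linarith, by linarith⟩
    have h3 := (h1.add h2).const_mul (1 - x)
    refine h3.congr' ?_
    filter_upwards [eventually_ge_atTop (1:ℝ)] with ℓ hℓ
    have habs : |ℓ - x| = ℓ + (-x) := by
      rw [abs_of_nonneg (by linarith)]; ring
    rw [habs]
    ring
end
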